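/- Let p ≥ 2 be a natural number, let A ∈ ℝ^{p×p} be symmetric positive semidefinite and let Ω ∈ ℝ^{p×p} be symmetric positive definite. For γ ∈ ℝ^{p−1} let x(γ) ∈ ℝ^p denote the vector (1, −γ₁, …, −γ_{p−1})ᵀ. Then the infimum over γ ∈ ℝ^{p−1} of the ratio (x(γ)ᵀ A x(γ)) / (x(γ)ᵀ Ω x(γ)) equals the smallest eigenvalue of the symmetric positive semidefinite matrix Ω^{-1/2} A Ω^{-1/2}. -/

import Mathlib

open Matrix

/-- Inverse of the unique symmetric positive semidefinite square root of a positive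
(semi)definite real matrix (junk value `0` if `P` is not positive semidefinite). -/
noncomputable def invSqrt {n : Type*} [Fintype n] [DecidableEq n]
    (P : Matrix n n ℝ) : Matrix n n ℝ := by
  classical exact if h : P.PosSemidef then
    ((h.1.eigenvectorUnitary : Matrix n n ℝ) *
      diagonal ((↑) ∘ Real.sqrt ∘ h.1.eigenvalues) *
      (star (h.1.eigenvectorUnitary : Matrix n n ℝ)))⁻¹ else 0

/-- `sortedEigs S j` is the `j`-th largest eigenvalue (0-indexed, decreasing order, with
multiplicity) of a real symmetric matrix `S` (junk value `0` if `S` is not symmetric);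
the smallest eigenvalue of an `n × n` symmetric matrix is `sortedEigs S ⟨n - 1, _⟩`. -/
noncomputable def sortedEigs {m : Type*} [Fintype m] [DecidableEq m]
    (S : Matrix m m ℝ) (j : Fin (Fintype.card m)) : ℝ := by
  classical
  exact if hS : S.IsHermitian then
    ((Finset.univ.val.map hS.eigenvalues).sort (· ≤ ·)).get
      ⟨Fintype.card m - 1 - j, by
        have hl : ((Finset.univ.val.map hS.eigenvalues).sort (· ≤ ·)).length
            = Fintype.card m := by simp
        rw [hl]; have := j.isLt; omega⟩
  else 0

lemma rayleigh_lower {p : ℕ} {M : Matrix (Fin p) (Fin p) ℝ} (hM : M.IsHermitian)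
    {c : ℝ} (hc : ∀ i, c ≤ hM.eigenvalues i) (x : Fin p → ℝ) :
    c * (x ⬝ᵥ x) ≤ x ⬝ᵥ M *ᵥ x := by
  have hps : (M - c • 1).PosSemidef := by
    have hU : (hM.eigenvectorUnitary : Matrix (Fin p) (Fin p) ℝ) *
        star (hM.eigenvectorUnitary : Matrix (Fin p) (Fin p) ℝ) = 1 :=
      (Matrix.mem_unitaryGroup_iff).mp hM.eigenvectorUnitary.2
    have h1 : M - c • 1 =
        (hM.eigenvectorUnitary : Matrix (Fin p) (Fin p) ℝ) *
          (diagonal (fun i => hM.eigenvalues i - c)) *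
          (hM.eigenvectorUnitary : Matrix (Fin p) (Fin p) ℝ)ᴴ := by
      conv_lhs => rw [hM.spectral_theorem, Unitary.conjStarAlgAut_apply]
      rw [← Matrix.star_eq_conjTranspose]
      have : (c : ℝ) • (1 : Matrix (Fin p) (Fin p) ℝ) =
          (hM.eigenvectorUnitary : Matrix (Fin p) (Fin p) ℝ) * (c • 1) *
            star (hM.eigenvectorUnitary : Matrix (Fin p) (Fin p) ℝ) := by
        rw [Matrix.mul_smul, Matrix.mul_one, Matrix.smul_mul, hU]
      rw [this, ← Matrix.sub_mul, ← Matrix.mul_sub]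
      congr 2
      ext i j
      by_cases h : i = j <;> simp [h, diagonal, Matrix.one_apply, RCLike.ofReal]
    rw [h1]
    exact (Matrix.posSemidef_diagonal_iff.mpr
      (fun i => sub_nonneg.mpr (hc i))).mul_mul_conjTranspose_same _
  have h0 := hps.re_dotProduct_nonneg x
  simp only [star_trivial, RCLike.re_to_real] at h0
  have : x ⬝ᵥ (M - c • 1) *ᵥ x = x ⬝ᵥ M *ᵥ x - c * (x ⬝ᵥ x) := by
    rw [Matrix.sub_mulVec, dotProduct_sub]
    congr 1
    rw [Matrix.smul_mulVec, Matrix.one_mulVec, dotProduct_smul, smul_eq_mul]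
  rw [this] at h0
  linarith

lemma sortedEigs_min {p : ℕ} {Mm : Matrix (Fin p) (Fin p) ℝ} (hM : Mm.IsHermitian)
    (j : Fin (Fintype.card (Fin p))) (hj : (j : ℕ) = p - 1) :
    (∃ i, hM.eigenvalues i = sortedEigs Mm j) ∧
      ∀ i, sortedEigs Mm j ≤ hM.eigenvalues i := by
  classical
  rw [sortedEigs, dif_pos hM]
  set l := ((Finset.univ.val.map hM.eigenvalues).sort (· ≤ ·)) with hl
  have hlen : l.length = Fintype.card (Fin p) := by simp [hl]
  have hidx : Fintype.card (Fin p) - 1 - (j : ℕ) = 0 := by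
    simp only [Fintype.card_fin] at *; omega
  have hsorted : l.Pairwise (· ≤ ·) := Multiset.pairwise_sort _ _
  have hmem : ∀ a : ℝ, a ∈ l ↔ ∃ i, hM.eigenvalues i = a := by
    intro a
    rw [hl, Multiset.mem_sort, Multiset.mem_map]
    simp
  constructor
  · have h0 : l.get ⟨Fintype.card (Fin p) - 1 - (j:ℕ), by omega⟩ ∈ l := l.get_mem _
    exact (hmem _).mp h0
  · intro i
    have hmemi : hM.eigenvalues i ∈ l := (hmem _).mpr ⟨i, rfl⟩
    obtain ⟨k, hk⟩ := List.get_of_mem hmemi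
    rw [← hk]
    refine hsorted.rel_get_of_le ?_
    have hjlt := j.isLt
    simp only [Fintype.card_fin] at hjlt
    simp only [Fin.le_def, hidx]
    omega

-- quadratic form scaling
lemma qf_smul {p : ℕ} (B : Matrix (Fin p) (Fin p) ℝ) (a : ℝ) (u : Fin p → ℝ) :
    (a • u) ⬝ᵥ B *ᵥ (a • u) = a ^ 2 * (u ⬝ᵥ B *ᵥ u) := by
  rw [Matrix.mulVec_smul, dotProduct_smul, smul_dotProduct]
  simp [smul_eq_mul]; ring

-- symmetric shift
lemma qf_shift {p : ℕ} (S B : Matrix (Fin p) (Fin p) ℝ) (hS : S.IsHermitian)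
    (x : Fin p → ℝ) :
    (S *ᵥ x) ⬝ᵥ B *ᵥ (S *ᵥ x) = x ⬝ᵥ (S * B * S) *ᵥ x := by
  have hST : Sᵀ = S := by
    have := hS.eq; rwa [Matrix.conjTranspose_eq_transpose_of_trivial] at this
  have h2 : x ᵥ* S = S *ᵥ x := by
    conv_lhs => rw [← hST]
    rw [Matrix.vecMul_transpose]
  calc (S *ᵥ x) ⬝ᵥ B *ᵥ (S *ᵥ x)
      = (S *ᵥ x) ⬝ᵥ ((B * S) *ᵥ x) := by rw [Matrix.mulVec_mulVec]
    _ = (x ᵥ* S) ⬝ᵥ ((B * S) *ᵥ x) := by rw [h2]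
    _ = x ⬝ᵥ (S *ᵥ ((B * S) *ᵥ x)) := (Matrix.dotProduct_mulVec _ _ _).symm
    _ = x ⬝ᵥ ((S * (B * S)) *ᵥ x) := by rw [Matrix.mulVec_mulVec]
    _ = x ⬝ᵥ (S * B * S) *ᵥ x := by rw [mul_assoc]

/-- with `p = n + 1 ≥ 2`: the infimum over `γ ∈ ℝ^{p-1}` of
`x(γ)ᵀ A x(γ) / x(γ)ᵀ Ω x(γ)` with `x(γ) = (1, -γ)ᵀ` equals the smallest eigenvalue
of `Ω^{-1/2} A Ω^{-1/2}`. -/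
theorem stmt_12 (n : ℕ) (hn : 1 ≤ n)
    (A W : Matrix (Fin (n + 1)) (Fin (n + 1)) ℝ)
    (hA : A.PosSemidef) (hW : W.PosDef) :
    ⨅ γ : Fin n → ℝ,
        (Matrix.vecCons 1 (-γ) ⬝ᵥ (A *ᵥ Matrix.vecCons 1 (-γ))) /
          (Matrix.vecCons 1 (-γ) ⬝ᵥ (W *ᵥ Matrix.vecCons 1 (-γ)))
      = sortedEigs (invSqrt W * A * invSqrt W)
          ⟨n, by simp only [Fintype.card_fin]; omega⟩ := by
  classical
  have hWps := hW.posSemidef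
  set S := (hWps.1.eigenvectorUnitary : Matrix (Fin (n+1)) (Fin (n+1)) ℝ) *
      diagonal ((↑) ∘ Real.sqrt ∘ hWps.1.eigenvalues) *
      (star (hWps.1.eigenvectorUnitary : Matrix (Fin (n+1)) (Fin (n+1)) ℝ)) with hSdef
  have hS : S.PosSemidef := by
    rw [hSdef, Matrix.star_eq_conjTranspose]
    exact (Matrix.posSemidef_diagonal_iff.mpr
      (fun i => by simp [Real.sqrt_nonneg])).mul_mul_conjTranspose_same _
  have hSS : S * S = W := by
    have hUU := Unitary.star_mul_self_of_mem hWps.1.eigenvectorUnitary.2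
    have hspec := hWps.1.spectral_theorem
    rw [Unitary.conjStarAlgAut_apply] at hspec
    have hdd : (diagonal ((↑) ∘ Real.sqrt ∘ hWps.1.eigenvalues) :
          Matrix (Fin (n+1)) (Fin (n+1)) ℝ) *
        (diagonal ((↑) ∘ Real.sqrt ∘ hWps.1.eigenvalues) :
          Matrix (Fin (n+1)) (Fin (n+1)) ℝ) =
        diagonal (RCLike.ofReal ∘ hWps.1.eigenvalues) := by
      rw [diagonal_mul_diagonal]
      congr 1
      funext i
      simp [Real.mul_self_sqrt (hWps.eigenvalues_nonneg i)]
    calc S * S = (hWps.1.eigenvectorUnitary : Matrix (Fin (n+1)) (Fin (n+1)) ℝ) *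
          (diagonal ((↑) ∘ Real.sqrt ∘ hWps.1.eigenvalues) *
            (star (hWps.1.eigenvectorUnitary : Matrix (Fin (n+1)) (Fin (n+1)) ℝ) *
              (hWps.1.eigenvectorUnitary : Matrix (Fin (n+1)) (Fin (n+1)) ℝ)) *
            diagonal ((↑) ∘ Real.sqrt ∘ hWps.1.eigenvalues)) *
          (star (hWps.1.eigenvectorUnitary : Matrix (Fin (n+1)) (Fin (n+1)) ℝ)) := by
          rw [hSdef]; noncomm_ring
      _ = W := by rw [hUU, mul_one, hdd]; exact hspec.symm
  have hdet : IsUnit S.det := by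
    refine isUnit_iff_ne_zero.mpr fun h => ?_
    have h2 : S.det * S.det = W.det := by rw [← Matrix.det_mul, hSS]
    rw [h, mul_zero] at h2
    exact hW.det_pos.ne' h2.symm
  have hSinv : S⁻¹ * S = 1 := Matrix.nonsing_inv_mul _ hdet
  have hSinv' : S * S⁻¹ = 1 := Matrix.mul_nonsing_inv _ hdet
  have hinvSqrt : invSqrt W = S⁻¹ := by rw [invSqrt, dif_pos hWps]
  set M := invSqrt W * A * invSqrt W with hMdef
  have hMeq : M = S⁻¹ * A * S⁻¹ := by rw [hMdef, hinvSqrt]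
  have hSiH : (S⁻¹).IsHermitian := hS.1.inv
  have hM : M.IsHermitian := by
    rw [hMeq]
    show _ᴴ = _
    rw [Matrix.conjTranspose_mul, Matrix.conjTranspose_mul, hSiH.eq, hA.1.eq, ← mul_assoc]
  obtain ⟨⟨i₀, hi₀⟩, hminle⟩ := sortedEigs_min hM
    (⟨n, by simp only [Fintype.card_fin]; omega⟩ : Fin (Fintype.card (Fin (n+1))))
    (by simp)
  set c := sortedEigs M
    (⟨n, by simp only [Fintype.card_fin]; omega⟩ : Fin (Fintype.card (Fin (n+1)))) with hcdef
  -- key identities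
  have hSMS : S * M * S = A := by
    rw [hMeq, show S * (S⁻¹ * A * S⁻¹) * S = (S * S⁻¹) * A * (S⁻¹ * S) from by noncomm_ring,
      hSinv', hSinv, one_mul, mul_one]
  have keyA : ∀ x : Fin (n+1) → ℝ, x ⬝ᵥ A *ᵥ x = (S *ᵥ x) ⬝ᵥ M *ᵥ (S *ᵥ x) := by
    intro x
    rw [qf_shift S M hS.1 x, hSMS]
  have keyW : ∀ x : Fin (n+1) → ℝ, x ⬝ᵥ W *ᵥ x = (S *ᵥ x) ⬝ᵥ (S *ᵥ x) := by
    intro x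
    have h := qf_shift S 1 hS.1 x
    rw [Matrix.one_mulVec, mul_one, hSS] at h
    exact h.symm
  have hlow : ∀ x : Fin (n+1) → ℝ, c * (x ⬝ᵥ W *ᵥ x) ≤ x ⬝ᵥ A *ᵥ x := by
    intro x
    rw [keyA x, keyW x]
    exact rayleigh_lower hM hminle (S *ᵥ x)
  have hden : ∀ x : Fin (n+1) → ℝ, x ≠ 0 → 0 < x ⬝ᵥ W *ᵥ x := by
    intro x hx
    have := hW.re_dotProduct_pos hx
    simpa using this
  have hxne : ∀ γ : Fin n → ℝ, Matrix.vecCons (1:ℝ) (-γ) ≠ 0 := by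
    intro γ h
    have := congrFun h 0
    simp at this
  have hF : ∀ γ : Fin n → ℝ,
      c ≤ (Matrix.vecCons 1 (-γ) ⬝ᵥ (A *ᵥ Matrix.vecCons 1 (-γ))) /
            (Matrix.vecCons 1 (-γ) ⬝ᵥ (W *ᵥ Matrix.vecCons 1 (-γ))) := by
    intro γ
    rw [le_div_iff₀ (hden _ (hxne γ))]
    exact hlow _
  have hbdd : BddBelow (Set.range fun γ : Fin n → ℝ =>
      (Matrix.vecCons 1 (-γ) ⬝ᵥ (A *ᵥ Matrix.vecCons 1 (-γ))) /
        (Matrix.vecCons 1 (-γ) ⬝ᵥ (W *ᵥ Matrix.vecCons 1 (-γ)))) :=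
    ⟨c, by rintro _ ⟨γ, rfl⟩; exact hF γ⟩
  refine le_antisymm ?_ (le_ciInf hF)
  -- eigenvector
  have hvne : (⇑(hM.eigenvectorBasis i₀) : Fin (n+1) → ℝ) ≠ 0 := by
    have h := hM.eigenvectorBasis.orthonormal.ne_zero i₀
    intro hcon
    apply h
    ext k
    exact congrFun hcon k
  set v : Fin (n+1) → ℝ := ⇑(hM.eigenvectorBasis i₀) with hvdef
  have hvev : M *ᵥ v = c • v := by rw [hM.mulVec_eigenvectorBasis i₀, hi₀]
  set x := S⁻¹ *ᵥ v with hxdef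
  have hSx : S *ᵥ x = v := by
    rw [hxdef, Matrix.mulVec_mulVec, hSinv', Matrix.one_mulVec]
  have hxne0 : x ≠ 0 := fun h => hvne (by rw [← hSx, h, Matrix.mulVec_zero])
  have hnum : x ⬝ᵥ A *ᵥ x = c * (x ⬝ᵥ W *ᵥ x) := by
    rw [keyA x, keyW x, hSx, hvev, dotProduct_smul, smul_eq_mul]
  have hdx : 0 < x ⬝ᵥ W *ᵥ x := hden x hxne0
  -- realizing quotients by γ
  have hreal : ∀ u : Fin (n+1) → ℝ, u 0 ≠ 0 → ∃ γ : Fin n → ℝ,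
      (Matrix.vecCons 1 (-γ) ⬝ᵥ (A *ᵥ Matrix.vecCons 1 (-γ))) /
          (Matrix.vecCons 1 (-γ) ⬝ᵥ (W *ᵥ Matrix.vecCons 1 (-γ)))
        = (u ⬝ᵥ A *ᵥ u) / (u ⬝ᵥ W *ᵥ u) := by
    intro u hu
    refine ⟨fun i => -(u i.succ / u 0), ?_⟩
    have hxu : Matrix.vecCons (1:ℝ) (-(fun i => -(u i.succ / u 0))) = (u 0)⁻¹ • u := by
      funext j
      refine Fin.cases ?_ (fun i => ?_) j
      · simp [inv_mul_cancel₀ hu]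
      · simp [div_eq_inv_mul, mul_comm]
    rw [hxu, qf_smul, qf_smul,
      mul_div_mul_left _ _ (pow_ne_zero 2 (inv_ne_zero hu))]
  by_cases hx0 : x 0 = 0
  · -- limit argument
    set e0 : Fin (n+1) → ℝ := Pi.single 0 1 with he0
    have hqcont : ∀ B : Matrix (Fin (n+1)) (Fin (n+1)) ℝ,
        Continuous fun t : ℝ => (x + t • e0) ⬝ᵥ B *ᵥ (x + t • e0) := by
      intro B
      simp only [dotProduct, Matrix.mulVec, Pi.add_apply, Pi.smul_apply, smul_eq_mul]
      fun_prop
    set g : ℝ → ℝ := fun t =>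
      ((x + t • e0) ⬝ᵥ A *ᵥ (x + t • e0)) / ((x + t • e0) ⬝ᵥ W *ᵥ (x + t • e0)) with hg
    have h00 : x + (0:ℝ) • e0 = x := by rw [zero_smul, add_zero]
    have htend : Filter.Tendsto g (nhdsWithin 0 {(0:ℝ)}ᶜ) (nhds c) := by
      have h1 : Filter.Tendsto g (nhds 0)
          (nhds (((x + (0:ℝ) • e0) ⬝ᵥ A *ᵥ (x + (0:ℝ) • e0)) /
            ((x + (0:ℝ) • e0) ⬝ᵥ W *ᵥ (x + (0:ℝ) • e0)))) :=
        ((hqcont A).tendsto 0).div ((hqcont W).tendsto 0) (by rw [h00]; exact hdx.ne')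
      rw [h00, hnum, mul_div_assoc, div_self hdx.ne', mul_one] at h1
      exact h1.mono_left nhdsWithin_le_nhds
    have hev : ∀ᶠ t in nhdsWithin 0 {(0:ℝ)}ᶜ,
        (⨅ γ : Fin n → ℝ,
          (Matrix.vecCons 1 (-γ) ⬝ᵥ (A *ᵥ Matrix.vecCons 1 (-γ))) /
            (Matrix.vecCons 1 (-γ) ⬝ᵥ (W *ᵥ Matrix.vecCons 1 (-γ)))) ≤ g t := by
      filter_upwards [self_mem_nhdsWithin] with t ht
      have hu0 : (x + t • e0) 0 ≠ 0 := by
        simp [hx0, he0, Pi.single_eq_same]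
        exact ht
      obtain ⟨γ, hγ⟩ := hreal _ hu0
      exact le_of_le_of_eq (ciInf_le hbdd γ) hγ
    exact ge_of_tendsto htend hev
  · obtain ⟨γ, hγ⟩ := hreal x hx0
    have hc' : (Matrix.vecCons 1 (-γ) ⬝ᵥ (A *ᵥ Matrix.vecCons 1 (-γ))) /
        (Matrix.vecCons 1 (-γ) ⬝ᵥ (W *ᵥ Matrix.vecCons 1 (-γ))) = c := by
      rw [hγ, hnum, mul_div_assoc, div_self hdx.ne', mul_one]
    exact hc' ▸ ciInf_le hbdd γ
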